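/- arXiv:1808.08298 — 2 statements merged into one kernel-verified Lean document; each statement's English description precedes it below -/
import Mathlib

section
/- Let X be a locally compact Hausdorff space with a continuous proper G-action and let π : C₀(X) → B(H) be a nondegenerate covariant representation on the G-Hilbert space H. Then for every φ ∈ C₀(X) and every vector v ∈ H, the norm ‖π(g·φ) v‖ tends to 0 as g → ∞ along the cocompact filter on G. -/
open scoped ZeroAtInfty
open Filter MeasureTheory Topology

noncomputable section

set_option linter.unusedSectionVars false

variable {G : Type*} [Group G] [TopologicalSpace G] [IsTopologicalGroup G]
  [LocallyCompactSpace G] [SecondCountableTopology G] [T2Space G]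
variable {X : Type*} [TopologicalSpace X] [LocallyCompactSpace X] [T2Space X]
variable [MulAction G X] [ContinuousSMul G X]
variable {H : Type*} [NormedAddCommGroup H] [InnerProductSpace ℂ H] [CompleteSpace H]
  [SecondCountableTopology H]

/-- The translation action of `G` on `C₀(X, ℂ)`: `(g • φ)(x) = φ(g⁻¹ • x)`. -/
def C0smul (g : G) (φ : C₀(X, ℂ)) : C₀(X, ℂ) where
  toFun := fun x => φ (g⁻¹ • x)
  continuous_toFun := φ.continuous.comp (continuous_const_smul g⁻¹)
  zero_at_infty' := φ.zero_at_infty'.comp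
    ((Homeomorph.smul (g⁻¹ : G)).toCocompactMap.cocompact_tendsto')

/-- Conjugation `g(T) = u_g T u_g⁻¹` by the unitary representation `u`. -/
def conjU (u : G →* unitary (H →L[ℂ] H)) (g : G) (T : H →L[ℂ] H) : H →L[ℂ] H :=
  (u g : H →L[ℂ] H) * T * ((u g⁻¹ : unitary (H →L[ℂ] H)) : H →L[ℂ] H)

/-- Membership in `C₀(G, K(H))`: norm-continuous, compact-operator valued, and
norm vanishing along the cocompact filter on `G`. -/
def InC0GK (f : G → (H →L[ℂ] H)) : Prop :=
  Continuous f ∧ (∀ g, IsCompactOperator (⇑(f g))) ∧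
    Tendsto (fun g => ‖f g‖) (cocompact G) (𝓝 0)

lemma aux_norm_apply_le (f : C₀(X, ℂ)) (x : X) : ‖f x‖ ≤ ‖f‖ := by
  rw [← ZeroAtInftyContinuousMap.norm_toBCF_eq_norm]
  exact f.toBCF.norm_coe_le_norm x

lemma aux_norm_le (f : C₀(X, ℂ)) {C : ℝ} (hC : 0 ≤ C) (h : ∀ x, ‖f x‖ ≤ C) : ‖f‖ ≤ C := by
  rw [← ZeroAtInftyContinuousMap.norm_toBCF_eq_norm]
  exact BoundedContinuousFunction.norm_le hC |>.mpr h

lemma aux_compact_level (f : C₀(X, ℂ)) {ε : ℝ} (hε : 0 < ε) : IsCompact {x | ε ≤ ‖f x‖} := by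
  have : {x : X | ‖f x‖ < ε} ∈ cocompact X := by
    filter_upwards [Metric.tendsto_nhds.mp f.zero_at_infty' ε hε] with x hx
    simpa [dist_zero_right] using hx
  obtain ⟨t, ht, hts⟩ := mem_cocompact.mp this
  refine ht.of_isClosed_subset
    (isClosed_le continuous_const (continuous_norm.comp (map_continuous f))) ?_
  intro x hx
  by_contra hxt
  exact absurd (hts hxt) (by simpa using hx)

lemma aux_C0smul_norm_le (g : G) (φ : C₀(X, ℂ)) : ‖C0smul g φ‖ ≤ ‖φ‖ :=
  aux_norm_le _ (norm_nonneg φ) fun x => aux_norm_apply_le φ (g⁻¹ • x)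

/-- Key lemma: `‖(g • φ) * ψ‖ → 0` along the cocompact filter. -/
lemma aux_key (hproper : IsProperMap fun p : G × X => (p.1 • p.2, p.2))
    (φ ψ : C₀(X, ℂ)) :
    Tendsto (fun g : G => ‖C0smul g φ * ψ‖) (cocompact G) (𝓝 0) := by
  rw [Metric.tendsto_nhds]
  intro ε hε
  set δ : ℝ := ε / (‖φ‖ + ‖ψ‖ + 1) with hδdef
  have hden : (0:ℝ) < ‖φ‖ + ‖ψ‖ + 1 := by positivity
  have hδ : 0 < δ := div_pos hε hden
  set K : Set X := {x | δ ≤ ‖φ x‖}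
  set L : Set X := {x | δ ≤ ‖ψ x‖}
  have hK := aux_compact_level φ hδ
  have hL := aux_compact_level ψ hδ
  have hpre : IsCompact ((fun p : G × X => (p.1 • p.2, p.2)) ⁻¹' (L ×ˢ K)) :=
    hproper.isCompact_preimage (hL.prod hK)
  have hT : IsCompact (Prod.fst '' ((fun p : G × X => (p.1 • p.2, p.2)) ⁻¹' (L ×ˢ K))) :=
    hpre.image continuous_fst
  set T := Prod.fst '' ((fun p : G × X => (p.1 • p.2, p.2)) ⁻¹' (L ×ˢ K)) with hTdef
  have hmem : Tᶜ ∈ cocompact G := mem_cocompact.mpr ⟨T, hT, subset_rfl⟩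
  filter_upwards [hmem] with g hg
  have hbound : ∀ x : X, ‖(C0smul g φ * ψ) x‖ ≤ δ * (‖φ‖ + ‖ψ‖) := by
    intro x
    have hval : (C0smul g φ * ψ) x = φ (g⁻¹ • x) * ψ x := rfl
    rw [hval, norm_mul]
    by_cases hx : δ ≤ ‖ψ x‖
    · have hnx : ¬ δ ≤ ‖φ (g⁻¹ • x)‖ := by
        intro hxe
        exact hg ⟨(g, g⁻¹ • x), ⟨by simpa using (show x ∈ L from hx), hxe⟩, rfl⟩
      calc ‖φ (g⁻¹ • x)‖ * ‖ψ x‖ ≤ δ * ‖ψ‖ :=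
            mul_le_mul (le_of_not_ge hnx) (aux_norm_apply_le ψ x) (norm_nonneg _) hδ.le
        _ ≤ δ * (‖φ‖ + ‖ψ‖) := by nlinarith [norm_nonneg φ]
    · calc ‖φ (g⁻¹ • x)‖ * ‖ψ x‖ ≤ ‖φ‖ * δ :=
            mul_le_mul (aux_norm_apply_le φ _) (le_of_not_ge hx) (norm_nonneg _)
              (norm_nonneg _)
        _ ≤ δ * (‖φ‖ + ‖ψ‖) := by nlinarith [norm_nonneg ψ, hδ.le]
  have hnorm : ‖C0smul g φ * ψ‖ ≤ δ * (‖φ‖ + ‖ψ‖) :=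
    aux_norm_le _ (by positivity) hbound
  have hlt : δ * (‖φ‖ + ‖ψ‖) < ε := by
    rw [hδdef, div_mul_eq_mul_div, div_lt_iff₀ hden]
    nlinarith [norm_nonneg φ, norm_nonneg ψ]
  rw [Real.dist_eq, sub_zero, abs_of_nonneg (norm_nonneg _)]
  exact lt_of_le_of_lt hnorm hlt

/-- Vanishing of `π(g • φ) w` for `w` in the span of `{π ψ x}`. -/
lemma aux_span (π : C₀(X, ℂ) →⋆ₙₐ[ℂ] (H →L[ℂ] H))
    (hproper : IsProperMap fun p : G × X => (p.1 • p.2, p.2))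
    (φ : C₀(X, ℂ)) {w : H}
    (hw : w ∈ Submodule.span ℂ (Set.range fun p : C₀(X, ℂ) × H => π p.1 p.2)) :
    Tendsto (fun g : G => π (C0smul g φ) w) (cocompact G) (𝓝 0) := by
  induction hw using Submodule.span_induction with
  | mem w hwmem =>
    obtain ⟨⟨ψ, x⟩, rfl⟩ := hwmem
    rw [tendsto_zero_iff_norm_tendsto_zero]
    have hle : ∀ g : G, ‖π (C0smul g φ) (π ψ x)‖ ≤ ‖C0smul g φ * ψ‖ * ‖x‖ := by
      intro g
      have : π (C0smul g φ) (π ψ x) = π (C0smul g φ * ψ) x := by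
        rw [map_mul]; rfl
      rw [this]
      calc ‖π (C0smul g φ * ψ) x‖ ≤ ‖π (C0smul g φ * ψ)‖ * ‖x‖ :=
            (π (C0smul g φ * ψ)).le_opNorm x
        _ ≤ ‖C0smul g φ * ψ‖ * ‖x‖ :=
            mul_le_mul_of_nonneg_right (NonUnitalStarAlgHom.norm_apply_le π _) (norm_nonneg x)
    refine squeeze_zero (fun g => norm_nonneg _) hle ?_
    simpa using (aux_key hproper φ ψ).mul_const ‖x‖
  | zero => simpa using tendsto_const_nhds
  | add a b _ _ ha hb => simpa using ha.add hb
  | smul c a _ ha => simpa using ha.const_smul c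

theorem statement_2
    (u : G →* unitary (H →L[ℂ] H))
    (hu : ∀ v : H, Continuous fun g : G => (u g : H →L[ℂ] H) v)
    (π : C₀(X, ℂ) →⋆ₙₐ[ℂ] (H →L[ℂ] H))
    (hπnd : Dense (Submodule.span ℂ (Set.range fun p : C₀(X, ℂ) × H => π p.1 p.2) : Set H))
    (hcov : ∀ (g : G) (φ : C₀(X, ℂ)),
      (u g : H →L[ℂ] H) * π φ * ((u g⁻¹ : unitary (H →L[ℂ] H)) : H →L[ℂ] H) = π (C0smul g φ))
    (hproper : IsProperMap fun p : G × X => (p.1 • p.2, p.2))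
    (φ : C₀(X, ℂ)) (v : H) :
    Tendsto (fun g : G => ‖π (C0smul g φ) v‖) (cocompact G) (𝓝 0) := by
  rw [Metric.tendsto_nhds]
  intro ε hε
  have hφ1 : (0:ℝ) < ‖φ‖ + 1 := by positivity
  obtain ⟨w, hwball, hw⟩ := Metric.dense_iff.mp hπnd v (ε / (2 * (‖φ‖ + 1))) (by positivity)
  have hwd : dist v w < ε / (2 * (‖φ‖ + 1)) := by
    rw [dist_comm]; exact Metric.mem_ball.mp hwball
  have hspan := aux_span π hproper φ hw
  rw [tendsto_zero_iff_norm_tendsto_zero, Metric.tendsto_nhds] at hspan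
  filter_upwards [hspan (ε / 2) (by positivity)] with g hg
  rw [Real.dist_eq, sub_zero, abs_of_nonneg (norm_nonneg _)] at hg ⊢
  have hdiff : ‖π (C0smul g φ) (v - w)‖ ≤ ‖φ‖ * ‖v - w‖ := by
    calc ‖π (C0smul g φ) (v - w)‖ ≤ ‖π (C0smul g φ)‖ * ‖v - w‖ :=
          (π (C0smul g φ)).le_opNorm _
      _ ≤ ‖φ‖ * ‖v - w‖ := by
          refine mul_le_mul_of_nonneg_right ?_ (norm_nonneg _)
          exact (NonUnitalStarAlgHom.norm_apply_le π _).trans (aux_C0smul_norm_le g φ)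
  have hvw : ‖v - w‖ < ε / (2 * (‖φ‖ + 1)) := by
    rw [← dist_eq_norm]; exact hwd
  calc ‖π (C0smul g φ) v‖
      ≤ ‖π (C0smul g φ) (v - w)‖ + ‖π (C0smul g φ) w‖ := by
        have : π (C0smul g φ) v = π (C0smul g φ) (v - w) + π (C0smul g φ) w := by
          rw [← map_add, sub_add_cancel]
        rw [this]; exact norm_add_le _ _
    _ < ‖φ‖ * (ε / (2 * (‖φ‖ + 1))) + ε / 2 := by
        refine add_lt_add_of_le_of_lt ?_ hg
        exact hdiff.trans (mul_le_mul_of_nonneg_left hvw.le (norm_nonneg φ))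
    _ ≤ ε / 2 + ε / 2 := by
        have : ‖φ‖ * (ε / (2 * (‖φ‖ + 1))) ≤ ε / 2 := by
          have h2 : ‖φ‖ * (ε / (2 * (‖φ‖ + 1))) ≤ (‖φ‖ + 1) * (ε / (2 * (‖φ‖ + 1))) :=
            mul_le_mul_of_nonneg_right (by linarith) (by positivity)
          have h3 : (‖φ‖ + 1) * (ε / (2 * (‖φ‖ + 1))) = ε / 2 := by
            field_simp
          linarith
        linarith
    _ = ε := by ring

end
end

section
/- Let X be a locally compact Hausdorff space with a continuous proper G-action, let π : C₀(X) → B(H) be a nondegenerate covariant representation on the G-Hilbert space H, and let T ∈ B(H) be such that for every φ ∈ C₀(X) the map g ↦ [π(g·φ), T] belongs to C₀(G, K(H)). Then for every φ ∈ C₀(X) the map g ↦ [π(φ), u_g T u_g⁻¹] also belongs to C₀(G, K(H)). -/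
open scoped ZeroAtInfty
open Filter MeasureTheory Topology

noncomputable section

variable {G : Type*} [Group G] [TopologicalSpace G] [IsTopologicalGroup G]
  [LocallyCompactSpace G] [SecondCountableTopology G] [T2Space G]
variable {X : Type*} [TopologicalSpace X] [LocallyCompactSpace X] [T2Space X]
variable [MulAction G X] [ContinuousSMul G X]
variable {H : Type*} [NormedAddCommGroup H] [InnerProductSpace ℂ H] [CompleteSpace H]
  [SecondCountableTopology H]

/-! ### Auxiliary lemmas -/

lemma C0smul_apply (g : G) (φ : C₀(X, ℂ)) (x : X) : C0smul g φ x = φ (g⁻¹ • x) := rfl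

lemma norm_unitary_coe_le (U : unitary (H →L[ℂ] H)) : ‖(U : H →L[ℂ] H)‖ ≤ 1 := by
  have h2 : ‖star (U : H →L[ℂ] H) * (U : H →L[ℂ] H)‖
      = ‖(U : H →L[ℂ] H)‖ * ‖(U : H →L[ℂ] H)‖ := CStarRing.norm_star_mul_self
  rw [Unitary.coe_star_mul_self] at h2
  have h3 : ‖(1 : H →L[ℂ] H)‖ ≤ 1 := by
    rw [ContinuousLinearMap.one_def]; exact ContinuousLinearMap.norm_id_le
  nlinarith [norm_nonneg (U : H →L[ℂ] H)]

lemma norm_unitary_mul_le (U : unitary (H →L[ℂ] H)) (S : H →L[ℂ] H) :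
    ‖(U : H →L[ℂ] H) * S‖ ≤ ‖S‖ :=
  (norm_mul_le _ _).trans (mul_le_of_le_one_left (norm_nonneg S) (norm_unitary_coe_le U))

lemma norm_unitary_apply_le (U : unitary (H →L[ℂ] H)) (v : H) :
    ‖(U : H →L[ℂ] H) v‖ ≤ ‖v‖ :=
  ((U : H →L[ℂ] H).le_opNorm v).trans
    (mul_le_of_le_one_left (norm_nonneg v) (norm_unitary_coe_le U))

/-- Left multiplication by a strongly continuous unitary family is norm continuous on a
fixed compact operator. -/
lemma contLeft (u : G →* unitary (H →L[ℂ] H))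
    (hu : ∀ v : H, Continuous fun g : G => (u g : H →L[ℂ] H) v)
    (K : H →L[ℂ] H) (hK : IsCompactOperator ⇑K) :
    Continuous fun g : G => (u g : H →L[ℂ] H) * K := by
  rw [continuous_iff_continuousAt]
  intro g₀
  rw [ContinuousAt, Metric.tendsto_nhds]
  intro ε hε
  obtain ⟨C, hCc, hCs⟩ :=
    IsCompactOperator.image_closedBall_subset_compact (f := (K : H →ₗ[ℂ] H)) hK 1
  obtain ⟨t, htfin, htsub⟩ := Metric.totallyBounded_iff.mp hCc.totallyBounded (ε/8) (by linarith)
  have hev : ∀ᶠ g in 𝓝 g₀, ∀ y ∈ t, ‖(u g : H →L[ℂ] H) y - (u g₀ : H →L[ℂ] H) y‖ < ε/8 := by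
    rw [eventually_all_finite htfin]
    intro y _
    have h := Metric.tendsto_nhds.mp ((hu y).tendsto g₀) (ε/8) (by linarith)
    simpa [dist_eq_norm] using h
  filter_upwards [hev] with g hg
  rw [dist_eq_norm]
  have key : ∀ x : H, ‖x‖ = 1 →
      ‖((u g : H →L[ℂ] H) * K - (u g₀ : H →L[ℂ] H) * K) x‖ ≤ ε/2 := by
    intro x hx
    have hx1 : ‖x‖ ≤ 1 := hx.le
    have hKx : K x ∈ C := hCs ⟨x, by simpa [Metric.mem_closedBall, dist_eq_norm] using hx1, rfl⟩
    obtain ⟨y, hyt, hy⟩ : ∃ y ∈ t, K x ∈ Metric.ball y (ε/8) := by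
      simpa using htsub hKx
    have hy' : ‖K x - y‖ < ε/8 := by simpa [Metric.mem_ball, dist_eq_norm] using hy
    have hgy := hg y hyt
    have hsplit : (u g : H →L[ℂ] H) (K x) - (u g₀ : H →L[ℂ] H) (K x) =
        (u g : H →L[ℂ] H) (K x - y) + ((u g : H →L[ℂ] H) y - (u g₀ : H →L[ℂ] H) y)
          + (u g₀ : H →L[ℂ] H) (y - K x) := by
      simp only [map_sub]; abel
    have b1 : ‖(u g : H →L[ℂ] H) (K x - y)‖ ≤ ε/8 :=
      (norm_unitary_apply_le _ _).trans hy'.le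
    have b3 : ‖(u g₀ : H →L[ℂ] H) (y - K x)‖ ≤ ε/8 := by
      refine (norm_unitary_apply_le _ _).trans ?_
      rw [norm_sub_rev]; exact hy'.le
    calc ‖((u g : H →L[ℂ] H) * K - (u g₀ : H →L[ℂ] H) * K) x‖
        = ‖(u g : H →L[ℂ] H) (K x) - (u g₀ : H →L[ℂ] H) (K x)‖ := by
          simp [ContinuousLinearMap.sub_apply, ContinuousLinearMap.mul_apply]
      _ ≤ ‖(u g : H →L[ℂ] H) (K x - y)‖ + ‖(u g : H →L[ℂ] H) y - (u g₀ : H →L[ℂ] H) y‖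
            + ‖(u g₀ : H →L[ℂ] H) (y - K x)‖ := by rw [hsplit]; exact norm_add₃_le
      _ ≤ ε/2 := by linarith
  have hb : ‖((u g : H →L[ℂ] H) * K - (u g₀ : H →L[ℂ] H) * K).restrictScalars ℝ‖ ≤ ε/2 :=
    ContinuousLinearMap.opNorm_le_of_unit_norm (by linarith) (fun x hx => by
      simpa using key x hx)
  rw [ContinuousLinearMap.norm_restrictScalars] at hb
  linarith

/-- Left multiplication by a strongly continuous unitary family is norm continuous on a
norm-continuous family of compact operators. -/
lemma contLeftFam (u : G →* unitary (H →L[ℂ] H))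
    (hu : ∀ v : H, Continuous fun g : G => (u g : H →L[ℂ] H) v)
    {F : G → H →L[ℂ] H} (hF : Continuous F) (hFc : ∀ g, IsCompactOperator ⇑(F g)) :
    Continuous fun g : G => (u g : H →L[ℂ] H) * F g := by
  rw [continuous_iff_continuousAt]
  intro g₀
  have h1 : Tendsto (fun g : G => (u g : H →L[ℂ] H) * (F g - F g₀)) (𝓝 g₀) (𝓝 0) := by
    apply squeeze_zero_norm (fun g => norm_unitary_mul_le _ _)
    have h : Tendsto (fun g : G => F g - F g₀) (𝓝 g₀) (𝓝 0) := by
      simpa using (hF.tendsto g₀).sub (tendsto_const_nhds (x := F g₀))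
    simpa using h.norm
  have h2 := (contLeft u hu (F g₀) (hFc g₀)).tendsto g₀
  have h3 := h1.add h2
  rw [zero_add] at h3
  have heq : ∀ g : G, (u g : H →L[ℂ] H) * (F g - F g₀) + (u g : H →L[ℂ] H) * F g₀
      = (u g : H →L[ℂ] H) * F g := by
    intro g; rw [mul_sub, sub_add_cancel]
  exact Tendsto.congr heq h3

/-- Schauder's theorem on Hilbert space: the adjoint of a compact operator is compact. -/
lemma isCompactOperator_adjoint {K : H →L[ℂ] H} (hK : IsCompactOperator ⇑K) :
    IsCompactOperator ⇑(ContinuousLinearMap.adjoint K) := by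
  set A := ContinuousLinearMap.adjoint K with hA
  have hTB : TotallyBounded (A '' Metric.closedBall 0 1) := by
    rw [Metric.totallyBounded_iff]
    intro ε hε
    have hSb : Bornology.IsBounded (A '' Metric.closedBall 0 1) :=
      A.lipschitz.isBounded_image Metric.isBounded_closedBall
    obtain ⟨C, hCc, hCs⟩ :=
      IsCompactOperator.image_subset_compact_of_bounded (f := (K : H →ₗ[ℂ] H)) hK hSb
    have hKS_tb : TotallyBounded (⇑K '' (A '' Metric.closedBall 0 1)) :=
      hCc.totallyBounded.subset hCs
    obtain ⟨t, hts, htfin, htcov⟩ := totallyBounded_iff_subset.mp hKS_tb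
      {p : H × H | dist p.1 p.2 < ε ^ 2 / 2} (Metric.dist_mem_uniformity (by positivity))
    choose! w hw1 hw2 using fun c (hc : c ∈ t) => hts hc
    refine ⟨w '' t, htfin.image w, ?_⟩
    rintro _ ⟨y, hy, rfl⟩
    have hKs : K (A y) ∈ ⋃ c ∈ t, {x : H | (x, c) ∈ {p : H × H | dist p.1 p.2 < ε ^ 2 / 2}} :=
      htcov ⟨A y, ⟨y, hy, rfl⟩, rfl⟩
    obtain ⟨c, hct, hdist⟩ := Set.mem_iUnion₂.mp hKs
    refine Set.mem_iUnion₂.mpr ⟨w c, ⟨c, hct, rfl⟩, ?_⟩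
    obtain ⟨y', hy', hwc⟩ := hw1 c hct
    have hKwc : K (w c) = c := hw2 c hct
    have hKdiff : ‖K (A y) - K (A y')‖ < ε ^ 2 / 2 := by
      have h : dist (K (A y)) c < ε ^ 2 / 2 := hdist
      rwa [← hKwc, ← hwc, dist_eq_norm] at h
    have hy1 : ‖y‖ ≤ 1 := by simpa using hy
    have hy'1 : ‖y'‖ ≤ 1 := by simpa using hy'
    have hsub : A y - A y' = A (y - y') := (map_sub A y y').symm
    have hKsub : K (A y) - K (A y') = K (A (y - y')) := by
      rw [← map_sub, hsub]
    have hv : ‖A (y - y')‖ ^ 2 ≤ 2 * ‖K (A (y - y'))‖ := by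
      have e1 : RCLike.re (inner ℂ (A (y - y')) (A (y - y'))) = ‖A (y - y')‖ ^ 2 :=
        inner_self_eq_norm_sq _
      have e2 : inner ℂ (A (y - y')) (A (y - y'))
          = inner ℂ (y - y') (K (A (y - y'))) :=
        ContinuousLinearMap.adjoint_inner_left K (A (y - y')) (y - y')
      have e3 : RCLike.re (inner ℂ (y - y') (K (A (y - y'))))
          ≤ ‖y - y'‖ * ‖K (A (y - y'))‖ :=
        (RCLike.re_le_norm _).trans (norm_inner_le_norm _ _)
      have e4 : ‖y - y'‖ ≤ 2 := (norm_sub_le _ _).trans (by linarith)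
      calc ‖A (y - y')‖ ^ 2 = RCLike.re (inner ℂ (y - y') (K (A (y - y')))) := by
            rw [← e1, e2]
        _ ≤ ‖y - y'‖ * ‖K (A (y - y'))‖ := e3
        _ ≤ 2 * ‖K (A (y - y'))‖ := mul_le_mul_of_nonneg_right e4 (norm_nonneg _)
    rw [hKsub] at hKdiff
    have hlt : ‖A (y - y')‖ ^ 2 < ε ^ 2 := by nlinarith
    rw [Metric.mem_ball, dist_eq_norm, ← hwc, hsub]
    exact lt_of_pow_lt_pow_left₀ 2 hε.le hlt
  have hcomp : IsCompact (closure (A '' Metric.closedBall 0 1)) :=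
    TotallyBounded.isCompact_of_isClosed hTB.closure isClosed_closure
  exact (isCompactOperator_iff_image_closedBall_subset_compact (f := (A : H →ₗ[ℂ] H))
    (one_pos : (0:ℝ) < 1)).mpr ⟨closure (A '' Metric.closedBall 0 1), hcomp, subset_closure⟩

lemma coe_u_inv_eq_star (u : G →* unitary (H →L[ℂ] H)) (g : G) :
    ((u g⁻¹ : unitary (H →L[ℂ] H)) : H →L[ℂ] H) = star ((u g : H →L[ℂ] H)) := by
  rw [map_inv, ← Unitary.star_eq_inv, Unitary.coe_star]

/-- Right multiplication by a strongly continuous unitary family is norm continuous on a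
norm-continuous family of compact operators. -/
lemma contRightFam (u : G →* unitary (H →L[ℂ] H))
    (hu : ∀ v : H, Continuous fun g : G => (u g : H →L[ℂ] H) v)
    {F : G → H →L[ℂ] H} (hF : Continuous F) (hFc : ∀ g, IsCompactOperator ⇑(F g)) :
    Continuous fun g : G => F g * ((u g⁻¹ : unitary (H →L[ℂ] H)) : H →L[ℂ] H) := by
  have key : (fun g : G => F g * ((u g⁻¹ : unitary (H →L[ℂ] H)) : H →L[ℂ] H))
      = fun g : G => star ((u g : H →L[ℂ] H) * star (F g)) := by
    funext g
    rw [star_mul, star_star, coe_u_inv_eq_star]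
  rw [key]
  have hFstar : Continuous fun g : G => star (F g) := hF.star
  have hFstarc : ∀ g : G, IsCompactOperator ⇑(star (F g)) := by
    intro g
    rw [ContinuousLinearMap.star_eq_adjoint]
    exact isCompactOperator_adjoint (hFc g)
  exact (contLeftFam u hu hFstar hFstarc).star

lemma isCompactOperator_mul_left (A : H →L[ℂ] H) {B : H →L[ℂ] H}
    (hB : IsCompactOperator ⇑B) : IsCompactOperator ⇑(A * B) := by
  rw [ContinuousLinearMap.mul_def, ContinuousLinearMap.coe_comp']
  exact hB.clm_comp A

lemma isCompactOperator_mul_right {A : H →L[ℂ] H} (hA : IsCompactOperator ⇑A)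
    (B : H →L[ℂ] H) : IsCompactOperator ⇑(A * B) := by
  rw [ContinuousLinearMap.mul_def, ContinuousLinearMap.coe_comp']
  exact hA.comp_clm B

theorem statement_9
    (u : G →* unitary (H →L[ℂ] H))
    (hu : ∀ v : H, Continuous fun g : G => (u g : H →L[ℂ] H) v)
    (π : C₀(X, ℂ) →⋆ₙₐ[ℂ] (H →L[ℂ] H))
    (hπnd : Dense (Submodule.span ℂ (Set.range fun p : C₀(X, ℂ) × H => π p.1 p.2) : Set H))
    (hcov : ∀ (g : G) (φ : C₀(X, ℂ)),
      (u g : H →L[ℂ] H) * π φ * ((u g⁻¹ : unitary (H →L[ℂ] H)) : H →L[ℂ] H) = π (C0smul g φ))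
    (hproper : IsProperMap fun p : G × X => (p.1 • p.2, p.2))
    (T : H →L[ℂ] H)
    (hT : ∀ φ : C₀(X, ℂ),
      InC0GK (fun g : G => π (C0smul g φ) * T - T * π (C0smul g φ)))
    (φ : C₀(X, ℂ)) :
    InC0GK (fun g : G => π φ * conjU u g T - conjU u g T * π φ) := by
  set f : G → H →L[ℂ] H := fun g => π (C0smul g φ) * T - T * π (C0smul g φ) with hf_def
  have hf : InC0GK f := hT φ
  -- the group identities
  have hvu : ∀ g : G, ((u g⁻¹ : unitary (H →L[ℂ] H)) : H →L[ℂ] H) * (u g : H →L[ℂ] H) = 1 := by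
    intro g
    calc ((u g⁻¹ : unitary (H →L[ℂ] H)) : H →L[ℂ] H) * (u g : H →L[ℂ] H)
        = ((u g⁻¹ * u g : unitary (H →L[ℂ] H)) : H →L[ℂ] H) := rfl
      _ = ((1 : unitary (H →L[ℂ] H)) : H →L[ℂ] H) := by rw [← map_mul, inv_mul_cancel, map_one]
      _ = 1 := rfl
  have hsmul : ∀ g : G, C0smul g (C0smul g⁻¹ φ) = φ := by
    intro g
    ext x
    simp [C0smul_apply, smul_smul]
  -- the key algebraic identity
  have hkey : ∀ g : G, π φ * conjU u g T - conjU u g T * π φ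
      = (u g : H →L[ℂ] H) * (f g⁻¹ * ((u g⁻¹ : unitary (H →L[ℂ] H)) : H →L[ℂ] H)) := by
    intro g
    set v : H →L[ℂ] H := ((u g⁻¹ : unitary (H →L[ℂ] H)) : H →L[ℂ] H) with hv
    have hππ : (u g : H →L[ℂ] H) * π (C0smul g⁻¹ φ) * v = π φ := by
      rw [hv, hcov g (C0smul g⁻¹ φ), hsmul g]
    have e1 : ∀ A B : H →L[ℂ] H,
        ((u g : H →L[ℂ] H) * A * v) * ((u g : H →L[ℂ] H) * B * v)
          = (u g : H →L[ℂ] H) * (A * B) * v := by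
      intro A B
      simp only [mul_assoc]
      rw [← mul_assoc v ((u g : H →L[ℂ] H)) (B * v), hvu g, one_mul]
    have hconj : conjU u g T = (u g : H →L[ℂ] H) * T * v := rfl
    rw [hconj, ← hππ, e1, e1, hf_def]
    simp only [sub_mul, mul_sub, mul_assoc]
  have hfun : (fun g : G => π φ * conjU u g T - conjU u g T * π φ)
      = fun g : G => (u g : H →L[ℂ] H)
          * (f g⁻¹ * ((u g⁻¹ : unitary (H →L[ℂ] H)) : H →L[ℂ] H)) := funext hkey
  rw [hfun]
  have hfc : Continuous fun g : G => f g⁻¹ := hf.1.comp continuous_inv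
  have hfcc : ∀ g : G, IsCompactOperator ⇑(f g⁻¹) := fun g => hf.2.1 g⁻¹
  have hRc : ∀ g : G, IsCompactOperator
      ⇑(f g⁻¹ * ((u g⁻¹ : unitary (H →L[ℂ] H)) : H →L[ℂ] H)) :=
    fun g => isCompactOperator_mul_right (hfcc g) _
  refine ⟨?_, ?_, ?_⟩
  · exact contLeftFam u hu (contRightFam u hu hfc hfcc) hRc
  · exact fun g => isCompactOperator_mul_left _ (hRc g)
  · apply squeeze_zero (fun g => norm_nonneg _) (g := fun g : G => ‖f g⁻¹‖)
    · intro g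
      refine (norm_unitary_mul_le _ _).trans ?_
      calc ‖f g⁻¹ * ((u g⁻¹ : unitary (H →L[ℂ] H)) : H →L[ℂ] H)‖
          ≤ ‖f g⁻¹‖ * ‖((u g⁻¹ : unitary (H →L[ℂ] H)) : H →L[ℂ] H)‖ := norm_mul_le _ _
        _ ≤ ‖f g⁻¹‖ := mul_le_of_le_one_right (norm_nonneg _) (norm_unitary_coe_le _)
    · exact hf.2.2.comp ((Homeomorph.inv G).toCocompactMap.cocompact_tendsto')

end
end
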